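/- Let p ≥ 0 be an integer, let c > 0, set k = 2p + 3, let n ≥ k, and let x_1 < ⋯ < x_n be distinct real numbers. Define n functions φ_1, …, φ_n : ℝ → ℝ as follows: for i = 1, …, (k−1)/2, let φ_i(x) = Σ_{j=1}^{(k−1)/2 + i} A^{(i)}_j K(x, x_j) where (A^{(i)}_j) is a nonzero solution of the left-sided kernel packet system on the points x_1, …, x_{(k−1)/2 + i}; for i = (k+1)/2, …, n − (k−1)/2, let φ_i(x) = Σ_{j=i−(k−1)/2}^{i+(k−1)/2} A^{(i)}_j K(x, x_j) where (A^{(i)}_j) is a nonzero solution of the kernel packet system on the k consecutive points x_{i−(k−1)/2}, …, x_{i+(k−1)/2}; and for i = n − (k−3)/2, …, n, let φ_i(x) = Σ_{j=i−(k−1)/2}^{n} A^{(i)}_j K(x, x_j) where (A^{(i)}_j) is a nonzero solution of the right-sided kernel packet system on the points x_{i−(k−1)/2}, …, x_n. Then the functions φ_1, …, φ_n are linearly independent over ℝ. -/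

import Mathlib

open Polynomial Finset



lemma rolle_finset (g : ℝ → ℝ) (hg : Continuous g) (t : Finset ℝ) (ht : ∀ x ∈ t, g x = 0) :
    ∃ t' : Finset ℝ, t.card ≤ t'.card + 1 ∧ ∀ x ∈ t', deriv g x = 0 := by
  rcases Nat.eq_zero_or_pos t.card with h0 | hpos
  · exact ⟨∅, by simp [h0], by simp⟩
  obtain ⟨m, hm⟩ : ∃ m, t.card = m + 1 := ⟨t.card - 1, by omega⟩
  set e := t.orderIsoOfFin hm with he
  have key : ∀ i : Fin m, ∃ y ∈ Set.Ioo (e i.castSucc : ℝ) (e i.succ : ℝ), deriv g y = 0 := by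
    intro i
    have hlt : (e i.castSucc : ℝ) < (e i.succ : ℝ) := by
      exact_mod_cast e.strictMono (Fin.castSucc_lt_succ (i := i))
    exact exists_deriv_eq_zero hlt hg.continuousOn
      (by rw [ht _ (e i.castSucc).2, ht _ (e i.succ).2])
  choose y hy hdy using key
  have hymono : StrictMono y := by
    intro i j hij
    have h1 : (y i) < (e i.succ : ℝ) := (hy i).2
    have h2 : (e j.castSucc : ℝ) < y j := (hy j).1
    have h3 : (e i.succ : ℝ) ≤ (e j.castSucc : ℝ) := by
      apply (e.le_iff_le).2
      simp [Fin.le_def]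
      omega
    linarith
  refine ⟨Finset.image y Finset.univ, ?_, ?_⟩
  · rw [Finset.card_image_of_injective _ hymono.injective, Finset.card_univ, Fintype.card_fin]
    omega
  · intro z hz
    rcases Finset.mem_image.1 hz with ⟨i, _, rfl⟩
    exact hdy i

lemma count_exp_poly (ε : ℝ) (hε : ε ≠ 0) :
    ∀ (d : ℕ) (P Q : ℝ[X]), P ≠ 0 → (Q = 0 ∨ Q.natDegree < d) →
    ∀ t : Finset ℝ, (∀ x ∈ t, P.eval x * Real.exp (ε * x) + Q.eval x = 0) →
    t.card ≤ P.natDegree + d := by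
  intro d
  induction d with
  | zero =>
    intro P Q hP hQ t ht
    rcases hQ with rfl | h; swap; · omega
    have hroots : ∀ x ∈ t, P.IsRoot x := by
      intro x hx
      have := ht x hx
      simp only [eval_zero, add_zero] at this
      have he : Real.exp (ε * x) ≠ 0 := Real.exp_ne_zero _
      have := mul_eq_zero.1 this
      tauto
    calc t.card ≤ P.roots.toFinset.card := by
          apply Finset.card_le_card
          intro x hx
          rw [Multiset.mem_toFinset, mem_roots hP]
          exact hroots x hx
        _ ≤ Multiset.card P.roots := P.roots.toFinset_card_le
        _ ≤ P.natDegree + 0 := by simpa using P.card_roots'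
  | succ d ih =>
    intro P Q hP hQ t ht
    by_cases hQ0 : Q = 0
    · have := ih P Q hP (Or.inl hQ0) t ht
      omega
    set g : ℝ → ℝ := fun x => P.eval x * Real.exp (ε * x) + Q.eval x with hgdef
    have hgc : Continuous g := by
      apply Continuous.add
      · exact (P.continuous_aeval).mul (Real.continuous_exp.comp (continuous_const.mul continuous_id))
      · exact Q.continuous_aeval
    obtain ⟨t', hcard, hdz⟩ := rolle_finset g hgc t ht
    set P₁ : ℝ[X] := derivative P + C ε * P with hP₁def
    have hderiv : ∀ x, deriv g x = P₁.eval x * Real.exp (ε * x) + (derivative Q).eval x := by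
      intro x
      have h1 : HasDerivAt (fun x => P.eval x * Real.exp (ε * x) + Q.eval x)
          ((derivative P).eval x * Real.exp (ε * x) + P.eval x * (Real.exp (ε * x) * ε)
            + (derivative Q).eval x) x := by
        apply HasDerivAt.add
        · exact (P.hasDerivAt x).mul ((Real.hasDerivAt_exp (ε * x)).comp x
            (by simpa using (hasDerivAt_id x).const_mul ε))
        · exact Q.hasDerivAt x
      rw [h1.deriv]
      simp [hP₁def]
      ring
    have hP₁ne : P₁ ≠ 0 := by
      intro h
      have hc : P₁.coeff P.natDegree = 0 := by rw [h]; simp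
      rw [hP₁def] at hc
      simp only [coeff_add, coeff_C_mul] at hc
      rw [coeff_derivative] at hc
      rw [coeff_natDegree_succ_eq_zero] at hc
      simp at hc
      rcases hc with hc | hc
      · exact hε hc
      · exact hP hc
    have hP₁deg : P₁.natDegree ≤ P.natDegree := by
      apply le_trans (natDegree_add_le _ _)
      apply max_le
      · exact le_trans (natDegree_derivative_le P) (Nat.sub_le _ _)
      · exact natDegree_C_mul_le _ _
    have hQ' : derivative Q = 0 ∨ (derivative Q).natDegree < d := by
      rcases Nat.eq_zero_or_pos Q.natDegree with h | h
      · left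
        obtain ⟨a, rfl⟩ := natDegree_eq_zero.1 h
        simp
      · right
        have := natDegree_derivative_lt (p := Q) (by omega)
        rcases hQ with h' | h'
        · exact absurd h' hQ0
        · omega
    have := ih P₁ (derivative Q) hP₁ne hQ' t' (by
      intro x hx
      rw [← hderiv x]
      exact hdz x hx)
    omega

lemma cheb_count (c : ℝ) (hc : c ≠ 0) (a b : ℕ) (P Q : ℝ[X])
    (hP : P = 0 ∨ P.natDegree < a) (hQ : Q = 0 ∨ Q.natDegree < b)
    (hPQ : ¬(P = 0 ∧ Q = 0)) (t : Finset ℝ)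
    (ht : ∀ x ∈ t, P.eval x * Real.exp (c * x) + Q.eval x * Real.exp (-(c * x)) = 0) :
    t.card < a + b := by
  have key : ∀ x ∈ t, P.eval x * Real.exp (2 * c * x) + Q.eval x = 0 := by
    intro x hx
    have h := ht x hx
    have h2 : (P.eval x * Real.exp (c * x) + Q.eval x * Real.exp (-(c * x)))
        * Real.exp (c * x) = 0 := by rw [h]; ring
    have e1 : Real.exp (2 * c * x) = Real.exp (c * x) * Real.exp (c * x) := by
      rw [← Real.exp_add]; ring_nf
    have h3 : Real.exp (-(c * x)) * Real.exp (c * x) = 1 := by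
      rw [← Real.exp_add]; simp
    have : P.eval x * Real.exp (2 * c * x) + Q.eval x = 0 := by
      rw [← h2, e1, add_mul, mul_assoc, mul_assoc, h3, mul_one]
    exact this
  by_cases hP0 : P = 0
  · have hQ0 : Q ≠ 0 := fun h => hPQ ⟨hP0, h⟩
    rcases hQ with rfl | hQd; · exact absurd rfl hQ0
    have hroots : ∀ x ∈ t, Q.IsRoot x := by
      intro x hx
      have := key x hx
      rw [hP0] at this
      simpa using this
    have : t.card ≤ Q.natDegree := by
      calc t.card ≤ Q.roots.toFinset.card := by
            apply Finset.card_le_card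
            intro x hx
            rw [Multiset.mem_toFinset, mem_roots hQ0]
            exact hroots x hx
          _ ≤ Multiset.card Q.roots := Q.roots.toFinset_card_le
          _ ≤ Q.natDegree := Q.card_roots'
    omega
  · rcases hP with h | hPd; · exact absurd h hP0
    have h2c : (2 : ℝ) * c ≠ 0 := by
      intro h; apply hc; linarith [h]
    have := count_exp_poly (2 * c) h2c b P Q hP0 hQ t key
    omega

lemma cheb_vanish (c : ℝ) (hc : c ≠ 0) (P Q : ℝ[X]) (I : Set ℝ) (hI : I.Infinite)
    (h : ∀ x ∈ I, P.eval x * Real.exp (c * x) + Q.eval x * Real.exp (-(c * x)) = 0) :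
    P = 0 ∧ Q = 0 := by
  by_contra hPQ
  obtain ⟨t, htI, htc⟩ := hI.exists_subset_card_eq ((P.natDegree + 1) + (Q.natDegree + 1))
  have := cheb_count c hc (P.natDegree + 1) (Q.natDegree + 1) P Q
    (Or.inr (by omega)) (Or.inr (by omega)) hPQ t (fun x hx => h x (htI hx))
  omega

noncomputable def expBasis (c : ℝ) (a : ℕ) (i : ℕ) (x : ℝ) : ℝ :=
  if i < a then x ^ i * Real.exp (c * x) else x ^ (i - a) * Real.exp (-(c * x))

lemma exp_interp (c : ℝ) (hc : c ≠ 0) (a b : ℕ) (z : Fin (a + b) → ℝ)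
    (hz : Function.Injective z) (w : Fin (a + b) → ℝ) :
    ∃ α : Fin (a + b) → ℝ, ∀ t, (∑ i, α i * expBasis c a i (z t)) = w t := by
  set M : Matrix (Fin (a + b)) (Fin (a + b)) ℝ :=
    Matrix.of (fun i t => expBasis c a (i : ℕ) (z t)) with hM
  have hML : ∀ α t, M.vecMulLinear α t = ∑ i, α i * expBasis c a (i : ℕ) (z t) := by
    intro α t
    simp [Matrix.vecMulLinear, Matrix.vecMul, dotProduct, hM]
  have hinj : Function.Injective M.vecMulLinear := by
    rw [injective_iff_map_eq_zero]
    intro α hα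
    set P : ℝ[X] := ∑ i : Fin (a + b),
      if (i : ℕ) < a then (C (α i) * X ^ (i : ℕ)) else 0 with hPdef
    set Q : ℝ[X] := ∑ i : Fin (a + b),
      if (i : ℕ) < a then 0 else (C (α i) * X ^ ((i : ℕ) - a)) with hQdef
    have hFval : ∀ y : ℝ, P.eval y * Real.exp (c * y) + Q.eval y * Real.exp (-(c * y))
        = ∑ i, α i * expBasis c a (i : ℕ) y := by
      intro y
      rw [hPdef, hQdef, eval_finset_sum, eval_finset_sum, Finset.sum_mul, Finset.sum_mul,
        ← Finset.sum_add_distrib]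
      apply Finset.sum_congr rfl
      intro i _
      by_cases h : (i : ℕ) < a <;> simp [h, expBasis] <;> ring
    have hcoeffP : ∀ i : Fin (a + b), (i : ℕ) < a → P.coeff (i : ℕ) = α i := by
      intro i hi
      rw [hPdef, finset_sum_coeff]
      rw [Finset.sum_eq_single i]
      · simp [hi]
      · intro i' _ hne
        by_cases h' : (i' : ℕ) < a
        · simp only [h', if_true, coeff_C_mul, coeff_X_pow]
          have : (i' : ℕ) ≠ (i : ℕ) := fun h => hne (Fin.ext h)
          simp [this]
          exact fun h => absurd h.symm this
        · simp [h']
      · simp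
    have hcoeffQ : ∀ i : Fin (a + b), ¬((i : ℕ) < a) → Q.coeff ((i : ℕ) - a) = α i := by
      intro i hi
      rw [hQdef, finset_sum_coeff]
      rw [Finset.sum_eq_single i]
      · simp [hi]
      · intro i' _ hne
        by_cases h' : (i' : ℕ) < a
        · simp [h']
        · simp only [h', if_false, coeff_C_mul, coeff_X_pow]
          have : (i' : ℕ) - a ≠ (i : ℕ) - a := by
            intro h
            apply hne; apply Fin.ext; omega
          simp [this]
          exact fun h => absurd h.symm this
      · simp
    have hPQ : P = 0 ∧ Q = 0 := by
      by_contra hPQ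
      have hPd : P = 0 ∨ P.natDegree < a := by
        rcases Nat.eq_zero_or_pos a with ha | ha
        · left
          rw [hPdef]
          apply Finset.sum_eq_zero
          intro i _
          simp [ha]
        · right
          apply Nat.lt_of_le_of_lt (Polynomial.natDegree_sum_le_of_forall_le _ _ (n := a - 1) ?_)
            (by omega)
          intro i _
          by_cases h : (i : ℕ) < a
          · simp only [h, if_true]
            apply le_trans (natDegree_C_mul_le _ _)
            rw [natDegree_X_pow]
            omega
          · simp [h]
      have hQd : Q = 0 ∨ Q.natDegree < b := by
        rcases Nat.eq_zero_or_pos b with hb | hb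
        · left
          rw [hQdef]
          apply Finset.sum_eq_zero
          intro i _
          have : (i : ℕ) < a := by omega
          simp [this]
        · right
          apply Nat.lt_of_le_of_lt (Polynomial.natDegree_sum_le_of_forall_le _ _ (n := b - 1) ?_)
            (by omega)
          intro i _
          by_cases h : (i : ℕ) < a
          · simp [h]
          · simp only [h, if_false]
            apply le_trans (natDegree_C_mul_le _ _)
            rw [natDegree_X_pow]
            have := i.2
            omega
      have := cheb_count c hc a b P Q hPd hQd hPQ (Finset.image z Finset.univ) (by
        intro y hy
        rcases Finset.mem_image.1 hy with ⟨t, _, rfl⟩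
        rw [hFval]
        rw [← hML α t, hα]
        rfl)
      rw [Finset.card_image_of_injective _ hz, Finset.card_univ, Fintype.card_fin] at this
      omega
    funext i
    by_cases h : (i : ℕ) < a
    · rw [Pi.zero_apply, ← hcoeffP i h, hPQ.1, coeff_zero]
    · rw [Pi.zero_apply, ← hcoeffQ i h, hPQ.2, coeff_zero]
  have hsurj : Function.Surjective M.vecMulLinear :=
    (LinearMap.injective_iff_surjective).1 hinj
  obtain ⟨α, hα⟩ := hsurj w
  exact ⟨α, fun t => by rw [← hML α t, hα]⟩


lemma kill {n : ℕ} (c : ℝ) (hc : c ≠ 0) (x : Fin n → ℝ) (hx : Function.Injective x)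
    (v : Fin n → ℝ) (S : Finset (Fin n)) (hsupp : ∀ j, j ∉ S → v j = 0)
    (a b : ℕ) (hcard : S.card ≤ a + b)
    (hL : ∀ l, l < a → ∑ j, v j * x j ^ l * Real.exp (c * x j) = 0)
    (hM : ∀ r, r < b → ∑ j, v j * x j ^ r * Real.exp (-(c * x j)) = 0) :
    v = 0 := by
  obtain ⟨B, hB⟩ : ∃ B : ℝ, ∀ j, x j ≤ B := by
    obtain ⟨B, hB⟩ := (Set.finite_range x).bddAbove
    exact ⟨B, fun j => hB (Set.mem_range_self j)⟩
  set s0 := S.card with hs0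
  set e := S.orderIsoOfFin rfl with he
  set z : Fin (a + b) → ℝ := fun t =>
    if h : (t : ℕ) < s0 then x (e ⟨t, h⟩ : S) else B + 1 + (t : ℕ) with hzdef
  have hz : Function.Injective z := by
    intro t1 t2 hteq
    rw [hzdef] at hteq
    simp only at hteq
    apply Fin.ext
    by_cases h1 : (t1 : ℕ) < s0 <;> by_cases h2 : (t2 : ℕ) < s0
    · rw [dif_pos h1, dif_pos h2] at hteq
      have := e.injective (Subtype.coe_injective (hx hteq))
      simpa using this
    · rw [dif_pos h1, dif_neg h2] at hteq
      have : (0:ℝ) ≤ (t2 : ℕ) := Nat.cast_nonneg _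
      have := hB (e ⟨t1, h1⟩ : S)
      linarith
    · rw [dif_neg h1, dif_pos h2] at hteq
      have : (0:ℝ) ≤ (t1 : ℕ) := Nat.cast_nonneg _
      have := hB (e ⟨t2, h2⟩ : S)
      linarith
    · rw [dif_neg h1, dif_neg h2] at hteq
      have : ((t1 : ℕ) : ℝ) = ((t2 : ℕ) : ℝ) := by linarith
      exact_mod_cast this
  have main : ∀ j0 ∈ S, v j0 = 0 := by
    intro j0 hj0
    obtain ⟨α, hα⟩ := exp_interp c hc a b z hz (fun t => if z t = x j0 then 1 else 0)
    have key : ∑ j : Fin n, v j * (∑ i : Fin (a + b), α i * expBasis c a (i : ℕ) (x j)) = 0 := by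
      have swap : ∑ j : Fin n, v j * (∑ i : Fin (a + b), α i * expBasis c a (i : ℕ) (x j))
          = ∑ i : Fin (a + b), α i * (∑ j : Fin n, v j * expBasis c a (i : ℕ) (x j)) := by
        simp_rw [Finset.mul_sum]
        rw [Finset.sum_comm]
        apply Finset.sum_congr rfl
        intro i _
        apply Finset.sum_congr rfl
        intro j _
        ring
      rw [swap]
      apply Finset.sum_eq_zero
      intro i _
      by_cases h : (i : ℕ) < a
      · have := hL (i : ℕ) h
        simp only [expBasis, h, if_true]
        simp_rw [← mul_assoc]
        rw [this, mul_zero]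
      · have hib : (i : ℕ) - a < b := by have := i.2; omega
        have := hM ((i : ℕ) - a) hib
        simp only [expBasis, h, if_false]
        simp_rw [← mul_assoc]
        rw [this, mul_zero]
    have eval : ∀ j ∈ S, (∑ i : Fin (a + b), α i * expBasis c a (i : ℕ) (x j))
        = if x j = x j0 then 1 else 0 := by
      intro j hj
      have hlt : ((e.symm ⟨j, hj⟩ : Fin s0) : ℕ) < s0 := (e.symm ⟨j, hj⟩).2
      set t : Fin (a + b) := ⟨(e.symm ⟨j, hj⟩ : Fin s0), by omega⟩ with htdef
      have hzt : z t = x j := by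
        rw [hzdef]
        simp only
        rw [dif_pos (show (t : ℕ) < s0 from hlt)]
        congr 1
        have : (⟨(t : ℕ), hlt⟩ : Fin s0) = e.symm ⟨j, hj⟩ := by
          apply Fin.ext; rfl
        rw [this]
        simp
      rw [← hzt]
      exact hα t
    have sum_eq : ∑ j : Fin n, v j * (∑ i : Fin (a + b), α i * expBasis c a (i : ℕ) (x j))
        = v j0 := by
      rw [← Finset.sum_subset (Finset.subset_univ S) (by
        intro j _ hj
        rw [hsupp j hj, zero_mul])]
      rw [Finset.sum_congr rfl (fun j hj => by rw [eval j hj])]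
      rw [Finset.sum_eq_single j0]
      · simp
      · intro j _ hne
        have : x j ≠ x j0 := fun h => hne (hx h)
        simp [this]
      · intro h
        exact absurd hj0 h
    rw [sum_eq] at key
    exact key
  funext j
  by_cases hj : j ∈ S
  · exact main j hj
  · exact hsupp j hj



/-- The polynomial factor `P_p(u) = (p! / (2p)!) ∑_{j=0}^{p} ((p+j)! / (j! (p-j)!)) (2cu)^{p-j}`
appearing in the half-integer Matérn kernel. -/
noncomputable def maternPoly (p : ℕ) (c : ℝ) (u : ℝ) : ℝ :=
  ((p.factorial : ℝ) / ((2 * p).factorial : ℝ)) *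
    ∑ j ∈ Finset.range (p + 1),
      (((p + j).factorial : ℝ) / ((j.factorial : ℝ) * ((p - j).factorial : ℝ))) *
        (2 * c * u) ^ (p - j)

/-- The half-integer Matérn kernel with smoothness `ν = p + 1/2`:
`K(x, x') = P_p(|x - x'|) exp (-c |x - x'|)`. -/
noncomputable def maternKernel (p : ℕ) (c : ℝ) (x x' : ℝ) : ℝ :=
  maternPoly p c |x - x'| * Real.exp (-(c * |x - x'|))


noncomputable def matPoly (p : ℕ) (c : ℝ) : ℝ[X] :=
  C ((p.factorial : ℝ) / ((2 * p).factorial : ℝ)) *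
    ∑ j ∈ Finset.range (p + 1),
      C (((p + j).factorial : ℝ) / ((j.factorial : ℝ) * ((p - j).factorial : ℝ))) *
        (C (2 * c) * X) ^ (p - j)

lemma matPoly_eval (p : ℕ) (c u : ℝ) : (matPoly p c).eval u = maternPoly p c u := by
  simp only [matPoly, maternPoly, eval_mul, eval_C, eval_finset_sum, eval_pow, eval_X]

lemma maternPoly_zero (p : ℕ) (c : ℝ) : maternPoly p c 0 = 1 := by
  rw [maternPoly]
  rw [Finset.sum_eq_single p]
  · rw [Nat.sub_self, pow_zero, mul_one]
    have h1 : (p.factorial : ℝ) ≠ 0 := Nat.cast_ne_zero.2 p.factorial_ne_zero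
    have h2 : ((2 * p).factorial : ℝ) ≠ 0 := Nat.cast_ne_zero.2 (2 * p).factorial_ne_zero
    have : p + p = 2 * p := by ring
    rw [this, Nat.factorial_zero]
    field_simp
    norm_num
  · intro j hj hne
    have hjp : j < p := by
      have := Finset.mem_range.1 hj
      omega
    rw [mul_zero, zero_pow (by omega : p - j ≠ 0), mul_zero]
  · intro h
    exact absurd (Finset.self_mem_range_succ p) h


/-- (Linear independence of the KP basis.) Let `p ≥ 0`, `c > 0`,
`k = 2p + 3`, `n ≥ k`, and `x_1 < ⋯ < x_n`. Using `0`-indexing (`i, j : Fin n`), row `i`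
of the coefficient matrix `A` is supported on the window `|i - j| ≤ p + 1` and is nonzero:
* for `i ≤ p` (rows `1, …, (k-1)/2`): `A i` is a nonzero solution of the
  left-sided kernel packet system on `x_0, …, x_{p+1+i}`, i.e.
  `∑_j A i j x_j^l exp(c x_j) = 0` for `l = 0, …, (k-3)/2 = p` and, when the number of
  points `s = p + 2 + i` satisfies `s ≥ (k+3)/2` (i.e. `i ≥ 1`),
  `∑_j A i j x_j^r exp(-c x_j) = 0` for `r = 0, …, s - (k+3)/2 = i - 1`;
* for `p + 1 ≤ i ≤ n - p - 2` (the middle rows): `A i` is a nonzero solution of the kernel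
  packet system on the `k` consecutive points `x_{i-p-1}, …, x_{i+p+1}`, i.e.
  `∑_j A i j x_j^l exp(δ c x_j) = 0` for `l = 0, …, p` and `δ = ±1`;
* for `i ≥ n - p - 1` (rows `n - (k-3)/2, …, n`): `A i` is a nonzero solution of the
  right-sided kernel packet system on `x_{i-p-1}, …, x_{n-1}`, i.e.
  `∑_j A i j x_j^l exp(-c x_j) = 0` for `l = 0, …, p` and, when the number of points
  `s = n - i + p + 1` satisfies `s ≥ (k+3)/2`, `∑_j A i j x_j^r exp(c x_j) = 0` for
  `r = 0, …, s - (k+3)/2 = n - i - 2`.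
Then the functions `φ_i(x) = ∑_j A i j K(x, x_j)` are linearly independent over `ℝ`. -/
theorem kp_basis_linear_independent
    (p : ℕ) (c : ℝ) (hc : 0 < c)
    (n : ℕ) (hn : 2 * p + 3 ≤ n)
    (x : Fin n → ℝ) (hx : StrictMono x)
    (A : Fin n → Fin n → ℝ)
    (hwindow : ∀ i j : Fin n,
      ((j : ℕ) + p + 1 < (i : ℕ) ∨ (i : ℕ) + p + 1 < (j : ℕ)) → A i j = 0)
    (hnz : ∀ i, A i ≠ 0)
    (hleft : ∀ i : Fin n, (i : ℕ) ≤ p →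
      (∀ l ≤ p, ∑ j, A i j * x j ^ l * Real.exp (c * x j) = 0) ∧
      (∀ r : ℕ, r + 1 ≤ (i : ℕ) → ∑ j, A i j * x j ^ r * Real.exp (-(c * x j)) = 0))
    (hmid : ∀ i : Fin n, p + 1 ≤ (i : ℕ) → (i : ℕ) + p + 2 ≤ n →
      ∀ l ≤ p, ∀ δ : ℝ, (δ = 1 ∨ δ = -1) →
        ∑ j, A i j * x j ^ l * Real.exp (δ * c * x j) = 0)
    (hright : ∀ i : Fin n, n ≤ (i : ℕ) + p + 1 →
      (∀ l ≤ p, ∑ j, A i j * x j ^ l * Real.exp (-(c * x j)) = 0) ∧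
      (∀ r : ℕ, r + (i : ℕ) + 2 ≤ n → ∑ j, A i j * x j ^ r * Real.exp (c * x j) = 0))
    (φ : Fin n → ℝ → ℝ)
    (hφ : ∀ i x', φ i x' = ∑ j, A i j * maternKernel p c x' (x j)) :
    LinearIndependent ℝ φ := by
  have hxinj : Function.Injective x := hx.injective
  apply (Fintype.linearIndependent_iff).2
  intro g hg
  set b : Fin n → ℝ := fun j => ∑ i, g i * A i j with hbdef
  -- Step A : the combined kernel expansion vanishes
  have hgx : ∀ x' : ℝ, ∑ j, b j * maternKernel p c x' (x j) = 0 := by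
    intro x'
    have h0 : (∑ i, g i • φ i) x' = 0 := by rw [hg]; rfl
    rw [Finset.sum_apply] at h0
    simp only [Pi.smul_apply, smul_eq_mul] at h0
    calc ∑ j, b j * maternKernel p c x' (x j)
        = ∑ j, ∑ i, g i * A i j * maternKernel p c x' (x j) := by
          apply Finset.sum_congr rfl
          intro j _
          rw [hbdef, Finset.sum_mul]
      _ = ∑ i, g i * φ i x' := by
          rw [Finset.sum_comm]
          apply Finset.sum_congr rfl
          intro i _
          rw [hφ, Finset.mul_sum]
          apply Finset.sum_congr rfl
          intro j _
          ring
      _ = 0 := h0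
  -- Step B : the prefix polynomials vanish
  have hQ1 : ∀ m : Fin n,
      (∑ j ∈ Finset.univ.filter (fun j => j ≤ m),
        C (b j * Real.exp (c * x j)) * (matPoly p c).comp (X - C (x j))) = 0 := by
    intro m
    set U : ℝ := if h : (m : ℕ) + 1 < n then x ⟨(m : ℕ) + 1, h⟩ else x m + 1 with hUdef
    have hU : x m < U := by
      rw [hUdef]
      split_ifs with h
      · exact hx (by simp [Fin.lt_def])
      · linarith
    have hclaim : ∀ x' ∈ Set.Ioo (x m) U,
        (∑ j ∈ Finset.univ.filter (fun j => ¬(j ≤ m)),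
          C (b j * Real.exp (-(c * x j))) * (matPoly p c).comp (C (x j) - X)).eval x'
            * Real.exp (c * x')
        + (∑ j ∈ Finset.univ.filter (fun j => j ≤ m),
          C (b j * Real.exp (c * x j)) * (matPoly p c).comp (X - C (x j))).eval x'
            * Real.exp (-(c * x')) = 0 := by
      intro x' hx'
      have e1 : ∑ j ∈ Finset.univ.filter (fun j => j ≤ m), b j * maternKernel p c x' (x j)
          = (∑ j ∈ Finset.univ.filter (fun j => j ≤ m),
            C (b j * Real.exp (c * x j)) * (matPoly p c).comp (X - C (x j))).eval x'
              * Real.exp (-(c * x')) := by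
        rw [eval_finset_sum, Finset.sum_mul]
        apply Finset.sum_congr rfl
        intro j hj
        have hjm : j ≤ m := (Finset.mem_filter.1 hj).2
        have hxj : x j < x' := lt_of_le_of_lt (hx.monotone hjm) hx'.1
        rw [maternKernel, abs_of_pos (by linarith : (0:ℝ) < x' - x j)]
        rw [eval_mul, eval_C, eval_comp, eval_sub, eval_X, eval_C, matPoly_eval]
        rw [show -(c * (x' - x j)) = c * x j + -(c * x') by ring, Real.exp_add]
        ring
      have e2 : ∑ j ∈ Finset.univ.filter (fun j => ¬(j ≤ m)), b j * maternKernel p c x' (x j)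
          = (∑ j ∈ Finset.univ.filter (fun j => ¬(j ≤ m)),
            C (b j * Real.exp (-(c * x j))) * (matPoly p c).comp (C (x j) - X)).eval x'
              * Real.exp (c * x') := by
        rw [eval_finset_sum, Finset.sum_mul]
        apply Finset.sum_congr rfl
        intro j hj
        have hjm : m < j := not_le.1 (Finset.mem_filter.1 hj).2
        have hmj : (m : ℕ) + 1 ≤ (j : ℕ) := hjm
        have hm1 : (m : ℕ) + 1 < n := by
          have := j.2
          omega
        have hUj : U ≤ x j := by
          rw [hUdef, dif_pos hm1]
          exact hx.monotone (by exact hmj)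
        have hxj : x' < x j := lt_of_lt_of_le hx'.2 hUj
        rw [maternKernel, abs_of_neg (by linarith : x' - x j < 0), neg_sub]
        rw [eval_mul, eval_C, eval_comp, eval_sub, eval_X, eval_C, matPoly_eval]
        rw [show -(c * (x j - x')) = -(c * x j) + c * x' by ring, Real.exp_add]
        ring
      have expand := Finset.sum_filter_add_sum_filter_not Finset.univ (fun j => j ≤ m)
        (fun j => b j * maternKernel p c x' (x j))
      rw [e1, e2] at expand
      rw [add_comm] at expand
      rw [expand]
      exact hgx x'
    exact (cheb_vanish c hc.ne' _ _ (Set.Ioo (x m) U) (Set.Ioo_infinite hU) hclaim).2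
  -- Step C : b = 0
  have hstep : ∀ j : Fin n, (∀ j' : Fin n, j' < j → b j' = 0) → b j = 0 := by
    intro j hprev
    have h0 := congrArg (eval (x j)) (hQ1 j)
    rw [eval_finset_sum, eval_zero] at h0
    simp only [eval_mul, eval_C, eval_comp, eval_sub, eval_X, matPoly_eval] at h0
    rw [Finset.sum_eq_single j] at h0
    · rw [sub_self, maternPoly_zero, mul_one] at h0
      rcases mul_eq_zero.1 h0 with h | h
      · exact h
      · exact absurd h (Real.exp_ne_zero _)
    · intro j' hj' hne
      have : j' < j := lt_of_le_of_ne (Finset.mem_filter.1 hj').2 hne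
      rw [hprev j' this, zero_mul, zero_mul]
    · intro h
      simp at h
  have hb : ∀ j, b j = 0 := by
    have hN : ∀ N : ℕ, ∀ j : Fin n, (j : ℕ) ≤ N → b j = 0 := by
      intro N
      induction N with
      | zero =>
        intro j hj
        apply hstep
        intro j' hj'
        have : (j' : ℕ) < (j : ℕ) := hj'
        omega
      | succ N ih =>
        intro j hj
        apply hstep
        intro j' hj'
        apply ih
        have : (j' : ℕ) < (j : ℕ) := hj'
        omega
    intro j
    exact hN n j (le_of_lt j.2)
  -- moments
  have mom : ∀ f : Fin n → ℝ, ∑ i, g i * (∑ j, A i j * f j) = 0 := by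
    intro f
    have swap : ∑ i, g i * (∑ j, A i j * f j) = ∑ j, (∑ i, g i * A i j) * f j := by
      simp_rw [Finset.mul_sum, Finset.sum_mul]
      rw [Finset.sum_comm]
      apply Finset.sum_congr rfl
      intro j _
      apply Finset.sum_congr rfl
      intro i _
      ring
    rw [swap]
    apply Finset.sum_eq_zero
    intro j _
    have hbj : (∑ i, g i * A i j) = 0 := hb j
    rw [hbj, zero_mul]
  -- Step D : right rows vanish
  have gright : ∀ d : ℕ, ∀ i : Fin n, n - 1 - (i : ℕ) = d → n ≤ (i : ℕ) + p + 1 → g i = 0 := by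
    intro d
    induction d using Nat.strong_induction_on with
    | _ d ih =>
    intro i hd hni
    set l : ℕ := n - 1 - (i : ℕ) with hldef
    have hin : (i : ℕ) < n := i.2
    have hlp : l ≤ p := by omega
    have key := mom (fun j => x j ^ l * Real.exp (c * x j))
    rw [Finset.sum_eq_single i] at key
    · by_cases hgi : g i = 0
      · exact hgi
      have hzero : ∑ j, A i j * x j ^ l * Real.exp (c * x j) = 0 := by
        have := (mul_eq_zero.1 key).resolve_left hgi
        rw [← this]
        apply Finset.sum_congr rfl
        intro j _
        ring
      exfalso
      apply hnz i
      apply kill c hc.ne' x hxinj (A i)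
        (Finset.univ.filter (fun j => (i : ℕ) ≤ (j : ℕ) + p + 1)) ?_ (l + 1) (p + 1) ?_ ?_ ?_
      · intro j hj
        simp only [Finset.mem_filter, Finset.mem_univ, true_and, not_le] at hj
        exact hwindow i j (Or.inl hj)
      · have hcard : (Finset.univ.filter (fun j : Fin n => (i : ℕ) ≤ (j : ℕ) + p + 1)).card
            ≤ (Finset.range (l + 1 + (p + 1))).card := by
          apply Finset.card_le_card_of_injOn (fun j : Fin n => (j : ℕ) + p + 1 - (i : ℕ))
          · intro j hj
            simp only [Finset.mem_coe, Finset.mem_filter, Finset.mem_univ, true_and] at hj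
            simp only [Finset.mem_coe, Finset.mem_range]
            have := j.2
            omega
          · intro j1 hj1 j2 hj2 heq
            simp only [Finset.coe_filter, Finset.mem_univ, Set.mem_setOf_eq, true_and] at hj1 hj2
            have heq' : (j1 : ℕ) + p + 1 - (i : ℕ) = (j2 : ℕ) + p + 1 - (i : ℕ) := heq
            apply Fin.ext
            omega
        simpa using hcard
      · intro r hr
        rcases Nat.lt_or_ge r l with h | h
        · exact (hright i hni).2 r (by omega)
        · have : r = l := by omega
          rw [this]
          exact hzero
      · intro r hr
        exact (hright i hni).1 r (by omega)
    · intro i' _ hne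
      by_cases hgt : (i : ℕ) < (i' : ℕ)
      · rw [ih (n - 1 - (i' : ℕ)) (by omega) i' rfl (by omega), zero_mul]
      · have hlt : (i' : ℕ) < (i : ℕ) := by
          rcases Nat.lt_or_ge (i' : ℕ) (i : ℕ) with h | h
          · exact h
          · exact absurd (Fin.ext (by omega)) hne
        have hz : ∑ j, A i' j * (x j ^ l * Real.exp (c * x j)) = 0 := by
          have hcases : (i' : ℕ) ≤ p ∨ (p + 1 ≤ (i' : ℕ) ∧ (i' : ℕ) + p + 2 ≤ n)
              ∨ (n ≤ (i' : ℕ) + p + 1 ∧ l + (i' : ℕ) + 2 ≤ n) := by omega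
        -- simplify shape
          rcases hcases with h | ⟨h1, h2⟩ | ⟨h1, h2⟩
          · have := (hleft i' h).1 l hlp
            rw [← this]
            apply Finset.sum_congr rfl; intro j _; ring
          · have := hmid i' h1 h2 l hlp 1 (Or.inl rfl)
            simp only [one_mul] at this
            rw [← this]
            apply Finset.sum_congr rfl; intro j _; ring
          · have := (hright i' h1).2 l h2
            rw [← this]
            apply Finset.sum_congr rfl; intro j _; ring
        rw [hz, mul_zero]
    · intro h
      exact absurd (Finset.mem_univ i) h
  -- Step E : all rows vanish
  have gall : ∀ d : ℕ, ∀ i : Fin n, n - 1 - (i : ℕ) = d → g i = 0 := by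
    intro d
    induction d using Nat.strong_induction_on with
    | _ d ih =>
    intro i hd
    by_cases hni : n ≤ (i : ℕ) + p + 1
    · exact gright d i hd hni
    have hin : (i : ℕ) < n := i.2
    set j1 : Fin n := ⟨(i : ℕ) + p + 1, by omega⟩ with hj1def
    have hcol : ∑ i', g i' * A i' j1 = 0 := hb j1
    rw [Finset.sum_eq_single i] at hcol
    · by_cases hgi : g i = 0
      · exact hgi
      have hA : A i j1 = 0 := (mul_eq_zero.1 hcol).resolve_left hgi
      exfalso
      apply hnz i
      rcases Nat.lt_or_ge p (i : ℕ) with hip | hip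
      · -- middle row
        apply kill c hc.ne' x hxinj (A i)
          (Finset.univ.filter (fun j => (i : ℕ) ≤ (j : ℕ) + p + 1 ∧ (j : ℕ) ≤ (i : ℕ) + p))
          ?_ (p + 1) (p + 1) ?_ ?_ ?_
        · intro j hj
          simp only [Finset.mem_filter, Finset.mem_univ, true_and, not_and_or, not_le] at hj
          rcases hj with h | h
          · exact hwindow i j (Or.inl h)
          · rcases Nat.lt_or_ge ((i : ℕ) + p + 1) (j : ℕ) with h' | h'
            · exact hwindow i j (Or.inr h')
            · have : j = j1 := Fin.ext (by simp [hj1def]; omega)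
              rw [this]; exact hA
        · have hcard : (Finset.univ.filter (fun j : Fin n =>
              (i : ℕ) ≤ (j : ℕ) + p + 1 ∧ (j : ℕ) ≤ (i : ℕ) + p)).card
              ≤ (Finset.range (p + 1 + (p + 1))).card := by
            apply Finset.card_le_card_of_injOn (fun j : Fin n => (j : ℕ) + p + 1 - (i : ℕ))
            · intro j hj
              simp only [Finset.mem_coe, Finset.mem_filter, Finset.mem_univ, true_and] at hj
              simp only [Finset.mem_coe, Finset.mem_range]
              omega
            · intro j1' hj1' j2' hj2' heq
              simp only [Finset.coe_filter, Finset.mem_univ, Set.mem_setOf_eq, true_and] at hj1' hj2'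
              have heq' : (j1' : ℕ) + p + 1 - (i : ℕ) = (j2' : ℕ) + p + 1 - (i : ℕ) := heq
              apply Fin.ext
              omega
          simpa using hcard
        · intro r hr
          have := hmid i (by omega) (by omega) r (by omega) 1 (Or.inl rfl)
          simpa only [one_mul] using this
        · intro r hr
          have := hmid i (by omega) (by omega) r (by omega) (-1) (Or.inr rfl)
          simpa only [neg_mul, one_mul] using this
      · -- left row
        apply kill c hc.ne' x hxinj (A i)
          (Finset.univ.filter (fun j => (j : ℕ) ≤ (i : ℕ) + p))
          ?_ (p + 1) (i : ℕ) ?_ ?_ ?_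
        · intro j hj
          simp only [Finset.mem_filter, Finset.mem_univ, true_and, not_le] at hj
          rcases Nat.lt_or_ge ((i : ℕ) + p + 1) (j : ℕ) with h' | h'
          · exact hwindow i j (Or.inr h')
          · have : j = j1 := Fin.ext (by simp [hj1def]; omega)
            rw [this]; exact hA
        · have hcard : (Finset.univ.filter (fun j : Fin n => (j : ℕ) ≤ (i : ℕ) + p)).card
              ≤ (Finset.range (p + 1 + (i : ℕ))).card := by
            apply Finset.card_le_card_of_injOn (fun j : Fin n => (j : ℕ))
            · intro j hj
              simp only [Finset.mem_coe, Finset.mem_filter, Finset.mem_univ, true_and] at hj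
              simp only [Finset.mem_coe, Finset.mem_range]
              omega
            · intro j1' hj1' j2' hj2' heq
              exact Fin.ext heq
          simpa using hcard
        · intro r hr
          exact (hleft i hip).1 r (by omega)
        · intro r hr
          exact (hleft i hip).2 r (by omega)
    · intro i' _ hne
      by_cases hgt : (i : ℕ) < (i' : ℕ)
      · rw [ih (n - 1 - (i' : ℕ)) (by omega) i' rfl, zero_mul]
      · have hlt : (i' : ℕ) < (i : ℕ) := by
          rcases Nat.lt_or_ge (i' : ℕ) (i : ℕ) with h | h
          · exact h
          · exact absurd (Fin.ext (by omega)) hne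
        rw [hwindow i' j1 (Or.inr (by simp [hj1def]; omega)), mul_zero]
    · intro h
      exact absurd (Finset.mem_univ i) h
  intro i
  exact gall (n - 1 - (i : ℕ)) i rfl
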